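/- Let h > 0, α ∈ (0,1), d ≥ 2, and let r : ℝ → ℝ≥0 be concave on [0,h]. Set r₀ = r((1−α)h). Then ∫₀^{(1−α)h} r(ξ)^{d−1} dξ ≤ (r₀^{d−1} h / (α^{d−1} d)) · (1 − α^d), and ∫_{(1−α)h}^{h} r(ξ)^{d−1} dξ ≥ (r₀^{d−1} h / (α^{d−1} d)) · α^d. -/

import Mathlib

open MeasureTheory Set intervalIntegral

theorem volumes_bounds {h α : ℝ} (hh : 0 < h) (hα : α ∈ Set.Ioo (0:ℝ) 1)
    {d : ℕ} (hd : 2 ≤ d)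
    (r : ℝ → ℝ) (hrnonneg : ∀ ξ, 0 ≤ r ξ)
    (hrconc : ConcaveOn ℝ (Set.Icc 0 h) r) :
    (∫ ξ in (0:ℝ)..((1 - α) * h), r ξ ^ (d - 1)) ≤
      r ((1 - α) * h) ^ (d - 1) * h / (α ^ (d - 1) * d) * (1 - α ^ d) ∧
    r ((1 - α) * h) ^ (d - 1) * h / (α ^ (d - 1) * d) * α ^ d ≤
      (∫ ξ in ((1 - α) * h)..h, r ξ ^ (d - 1)) := by
  obtain ⟨n, rfl⟩ : ∃ n, d = n + 2 := ⟨d - 2, by omega⟩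
  have hd1 : n + 2 - 1 = n + 1 := rfl
  simp only [hd1]
  obtain ⟨hα0, hα1⟩ := hα
  set b : ℝ := (1 - α) * h with hbdef
  have hb0 : 0 < b := mul_pos (by linarith) hh
  have hbh : b < h := by nlinarith
  have hαh : 0 < α * h := mul_pos hα0 hh
  have hr0 : 0 ≤ r b := hrnonneg b
  set c : ℝ := r b / (α * h) with hcdef
  have hc0 : 0 ≤ c := div_nonneg hr0 hαh.le
  have hdR : ((n : ℝ) + 2) ≠ 0 := by positivity
  -- pointwise upper bound on [0, b]
  have hleft : ∀ ξ ∈ Set.Icc (0:ℝ) b, r ξ ≤ c * (h - ξ) := by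
    rintro ξ ⟨h1, h2⟩
    have hξh : ξ < h := lt_of_le_of_lt h2 hbh
    have hpos : 0 < h - ξ := by linarith
    have key := hrconc.2 (x := ξ) (y := h) ⟨h1, hξh.le⟩ ⟨hh.le, le_refl h⟩
      (div_nonneg hαh.le hpos.le) (div_nonneg (by linarith : (0:ℝ) ≤ b - ξ) hpos.le)
      (by rw [← add_div, div_eq_one_iff_eq hpos.ne']; rw [hbdef]; ring)
    have hxy : (α * h / (h - ξ)) • ξ + ((b - ξ) / (h - ξ)) • h = b := by
      simp only [smul_eq_mul]
      rw [div_mul_eq_mul_div, div_mul_eq_mul_div, ← add_div,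
        div_eq_iff hpos.ne', hbdef]; ring
    rw [hxy] at key
    simp only [smul_eq_mul] at key
    have h2' : 0 ≤ (b - ξ) / (h - ξ) * r h :=
      mul_nonneg (div_nonneg (by linarith) hpos.le) (hrnonneg h)
    have hmain : α * h / (h - ξ) * r ξ ≤ r b := by linarith
    rw [div_mul_eq_mul_div, div_le_iff₀ hpos] at hmain
    rw [hcdef, div_mul_eq_mul_div, le_div_iff₀ hαh]
    nlinarith
  -- pointwise lower bound on [b, h]
  have hright : ∀ ξ ∈ Set.Icc b h, c * (h - ξ) ≤ r ξ := by
    rintro ξ ⟨h1, h2⟩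
    have key := hrconc.2 (x := b) (y := h) ⟨hb0.le, hbh.le⟩ ⟨hh.le, le_refl h⟩
      (div_nonneg (by linarith : (0:ℝ) ≤ h - ξ) hαh.le)
      (div_nonneg (by linarith : (0:ℝ) ≤ ξ - b) hαh.le)
      (by rw [← add_div, div_eq_one_iff_eq hαh.ne']; rw [hbdef]; ring)
    have hxy : ((h - ξ) / (α * h)) • b + ((ξ - b) / (α * h)) • h = ξ := by
      simp only [smul_eq_mul]
      rw [div_mul_eq_mul_div, div_mul_eq_mul_div, ← add_div,
        div_eq_iff hαh.ne', hbdef]; ring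
    rw [hxy] at key
    simp only [smul_eq_mul] at key
    have h2' : 0 ≤ (ξ - b) / (α * h) * r h :=
      mul_nonneg (div_nonneg (by linarith) hαh.le) (hrnonneg h)
    have hfin : (h - ξ) / (α * h) * r b ≤ r ξ := by linarith
    calc c * (h - ξ) = (h - ξ) / (α * h) * r b := by
          rw [hcdef]; field_simp
      _ ≤ r ξ := hfin
  -- global bound on [b, h]
  have hboundR : ∀ ξ ∈ Set.Icc b h, r ξ ≤ r b * h / b := by
    rintro ξ ⟨h1, h2⟩
    have hξ0 : 0 < ξ := lt_of_lt_of_le hb0 h1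
    have key := hrconc.2 (x := 0) (y := ξ) ⟨le_refl 0, hh.le⟩ ⟨hξ0.le, h2⟩
      (div_nonneg (by linarith : (0:ℝ) ≤ ξ - b) hξ0.le)
      (div_nonneg hb0.le hξ0.le)
      (by rw [← add_div, div_eq_one_iff_eq hξ0.ne']; ring)
    have hxy : ((ξ - b) / ξ) • (0:ℝ) + (b / ξ) • ξ = b := by
      simp only [smul_eq_mul, mul_zero, zero_add]
      field_simp
    rw [hxy] at key
    simp only [smul_eq_mul, mul_zero, zero_add] at key
    have h2' : 0 ≤ (ξ - b) / ξ * r 0 :=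
      mul_nonneg (div_nonneg (by linarith) hξ0.le) (hrnonneg 0)
    have hfin : b / ξ * r ξ ≤ r b := by linarith
    rw [div_mul_eq_mul_div, div_le_iff₀ hξ0] at hfin
    rw [le_div_iff₀ hb0]
    nlinarith [hrnonneg ξ]
  have hcont : ContinuousOn r (Set.Ioo 0 h) :=
    (hrconc.subset Set.Ioo_subset_Icc_self (convex_Ioo 0 h)).continuousOn isOpen_Ioo
  -- integrability
  have hintaux : ∀ (a₁ b₁ M : ℝ), a₁ ≤ b₁ → (∀ ξ ∈ Set.Icc a₁ b₁, r ξ ≤ M) →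
      Set.Ioo a₁ b₁ ⊆ Set.Ioo 0 h →
      IntervalIntegrable (fun ξ => r ξ ^ (n + 1)) volume a₁ b₁ := by
    intro a₁ b₁ M hab hM hsub
    rw [intervalIntegrable_iff_integrableOn_Ioc_of_le hab,
      integrableOn_Ioc_iff_integrableOn_Ioo]
    have meas : AEStronglyMeasurable (fun ξ => r ξ ^ (n + 1))
        (volume.restrict (Set.Ioo a₁ b₁)) :=
      ((hcont.mono hsub).pow _).aestronglyMeasurable measurableSet_Ioo
    refine Integrable.mono' (g := fun _ => M ^ (n + 1)) ?_ meas ?_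
    · exact integrableOn_const measure_Ioo_lt_top.ne
    · filter_upwards [ae_restrict_mem measurableSet_Ioo] with ξ hξ
      rw [Real.norm_eq_abs, abs_of_nonneg (pow_nonneg (hrnonneg ξ) _)]
      exact pow_le_pow_left₀ (hrnonneg ξ) (hM ξ (Set.Ioo_subset_Icc_self hξ)) _
  have intL : IntervalIntegrable (fun ξ => r ξ ^ (n + 1)) volume 0 b := by
    refine hintaux 0 b (c * h) hb0.le (fun ξ hξ => ?_) (Set.Ioo_subset_Ioo_right hbh.le)
    have := hleft ξ hξ
    nlinarith [hξ.1]
  have intR : IntervalIntegrable (fun ξ => r ξ ^ (n + 1)) volume b h :=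
    hintaux b h (r b * h / b) hbh.le hboundR (Set.Ioo_subset_Ioo_left hb0.le)
  have intℓ : ∀ a₁ b₁ : ℝ, IntervalIntegrable (fun ξ => (c * (h - ξ)) ^ (n + 1)) volume a₁ b₁ :=
    fun a₁ b₁ => (((continuous_const.mul (continuous_const.sub continuous_id)).pow
      _).intervalIntegrable a₁ b₁)
  -- exact value of the comparison integral
  have calcInt : ∀ a₁ b₁ : ℝ, (∫ ξ in a₁..b₁, (c * (h - ξ)) ^ (n + 1)) =
      c ^ (n + 1) * (((h - a₁) ^ (n + 2) - (h - b₁) ^ (n + 2)) / ((n : ℝ) + 2)) := by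
    intro a₁ b₁
    simp_rw [mul_pow]
    rw [intervalIntegral.integral_const_mul]
    congr 1
    rw [intervalIntegral.integral_comp_sub_left (fun x => x ^ (n + 1)) h, integral_pow]
    push_cast
    ring
  have hhb : h - b = α * h := by rw [hbdef]; ring
  constructor
  · have hmono : (∫ ξ in (0:ℝ)..b, r ξ ^ (n + 1)) ≤
        ∫ ξ in (0:ℝ)..b, (c * (h - ξ)) ^ (n + 1) := by
      refine intervalIntegral.integral_mono_on hb0.le intL (intℓ 0 b) (fun ξ hξ => ?_)
      exact pow_le_pow_left₀ (hrnonneg ξ) (hleft ξ hξ) _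
    refine hmono.trans (le_of_eq ?_)
    rw [calcInt, hhb, hcdef, sub_zero]
    push_cast
    simp only [div_pow, mul_pow, pow_succ]
    field_simp
  · have hmono : (∫ ξ in b..h, (c * (h - ξ)) ^ (n + 1)) ≤
        ∫ ξ in b..h, r ξ ^ (n + 1) := by
      refine intervalIntegral.integral_mono_on hbh.le (intℓ b h) intR (fun ξ hξ => ?_)
      exact pow_le_pow_left₀ (mul_nonneg hc0 (by linarith [hξ.2])) (hright ξ hξ) _
    refine le_trans (le_of_eq ?_) hmono
    rw [calcInt, hhb, hcdef, sub_self]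
    push_cast
    simp only [div_pow, mul_pow, pow_succ]
    field_simp
    ring
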